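/- arXiv:2502.09376 — 4 statements merged into one kernel-verified Lean document; each statement's English description precedes it below -/
import Mathlib

section
/- Let A ∈ ℝ^{m×r} and B ∈ ℝ^{n×r} be matrices satisfying AᵀA = BᵀB. Then there exists an orthonormal matrix W ∈ ℝ^{r×r} (WᵀW = I) such that A = U Σ^{1/2} Wᵀ and B = V Σ^{1/2} Wᵀ, where U Σ Vᵀ is a compact singular value decomposition of ABᵀ. -/
open Matrix BigOperators

/-- Frobenius norm of a real matrix. -/
noncomputable def frob {m n : ℕ} (X : Matrix (Fin m) (Fin n) ℝ) : ℝ :=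
  Real.sqrt (∑ i, ∑ j, (X i j) ^ 2)

/-- Frobenius (trace) inner product ⟨A,B⟩ = tr(AᵀB). -/
def mip {m n : ℕ} (A B : Matrix (Fin m) (Fin n) ℝ) : ℝ :=
  ∑ i, ∑ j, A i j * B i j

/-- Nuclear norm: sum of singular values, i.e. sum of square roots of the
eigenvalues of XᴴX. -/
noncomputable def nuc {m n : ℕ} (X : Matrix (Fin m) (Fin n) ℝ) : ℝ :=
  ∑ i, Real.sqrt ((Matrix.isHermitian_conjTranspose_mul_self X).eigenvalues i)

lemma colfac {m r : ℕ} (hrm : r ≤ m) (C : Matrix (Fin m) (Fin r) ℝ) (σ : Fin r → ℝ)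
    (h : Cᵀ * C = Matrix.diagonal σ) :
    ∃ U : Matrix (Fin m) (Fin r) ℝ, Uᵀ * U = 1 ∧
      C = U * Matrix.diagonal (fun i => Real.sqrt (σ i)) := by
  have hcol : ∀ i j, ∑ k, C k i * C k j = Matrix.diagonal σ i j := by
    intro i j
    have := congrFun (congrFun h i) j
    simpa [Matrix.mul_apply, Matrix.transpose_apply] using this
  have hnn : ∀ i, 0 ≤ σ i := by
    intro i
    have := hcol i i
    simp [Matrix.diagonal_apply_eq] at this
    rw [← this]
    exact Finset.sum_nonneg fun k _ => mul_self_nonneg _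
  have hzero : ∀ i, σ i = 0 → ∀ k, C k i = 0 := by
    intro i hi k
    have h1 : ∑ k, C k i * C k i = 0 := by
      rw [hcol i i]; simp [hi]
    have h2 : ∀ k ∈ Finset.univ, 0 ≤ C k i * C k i := fun k _ => mul_self_nonneg _
    have := (Finset.sum_eq_zero_iff_of_nonneg h2).mp h1 k (Finset.mem_univ k)
    exact mul_self_eq_zero.mp this
  -- normalized columns
  set u : Fin r → EuclideanSpace ℝ (Fin m) :=
    fun i => WithLp.toLp 2 (fun k => (Real.sqrt (σ i))⁻¹ * C k i) with hu
  have hinj : Function.Injective (Fin.castLE hrm) := Fin.castLE_injective hrm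
  set v : Fin m → EuclideanSpace ℝ (Fin m) := Function.extend (Fin.castLE hrm) u 0 with hv
  have hvu : ∀ i, v (Fin.castLE hrm i) = u i := fun i => hinj.extend_apply u 0 i
  set s : Set (Fin m) := (Fin.castLE hrm) '' {i | σ i ≠ 0} with hs
  have hinner : ∀ i j, (inner ℝ (u i) (u j) : ℝ)
      = (Real.sqrt (σ i))⁻¹ * ((Real.sqrt (σ j))⁻¹ * Matrix.diagonal σ i j) := by
    intro i j
    rw [PiLp.inner_apply]
    simp only [RCLike.inner_apply, starRingEnd_apply, star_trivial, hu, PiLp.toLp_apply]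
    rw [← hcol i j, Finset.mul_sum, Finset.mul_sum]
    apply Finset.sum_congr rfl
    intro k _
    ring
  have horth : Orthonormal ℝ (s.restrict v) := by
    rw [orthonormal_iff_ite]
    rintro ⟨a, ha⟩ ⟨b, hb⟩
    obtain ⟨i, hi, rfl⟩ := ha
    obtain ⟨j, hj, rfl⟩ := hb
    show inner ℝ (v (Fin.castLE hrm i)) (v (Fin.castLE hrm j)) = _
    rw [hvu, hvu]
    rw [hinner]
    by_cases hij : i = j
    · subst hij
      simp only [Matrix.diagonal_apply_eq, if_pos rfl]
      have hσ : Real.sqrt (σ i) ≠ 0 := by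
        simp [Real.sqrt_eq_zero (hnn i)]; exact hi
      field_simp
      simp [Real.sq_sqrt (hnn i)]
    · rw [Matrix.diagonal_apply_ne _ hij]
      split_ifs with hc
      · exact absurd (hinj (Subtype.mk_eq_mk.mp hc)) hij
      ring
  obtain ⟨b, hb⟩ := horth.exists_orthonormalBasis_extension_of_card_eq
    (by simp [finrank_euclideanSpace])
  refine ⟨Matrix.of fun k i => b (Fin.castLE hrm i) k, ?_, ?_⟩
  · ext i j
    have hbo := b.orthonormal
    rw [orthonormal_iff_ite] at hbo
    have := hbo (Fin.castLE hrm i) (Fin.castLE hrm j)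
    rw [PiLp.inner_apply] at this
    simp only [RCLike.inner_apply, starRingEnd_apply, star_trivial] at this
    have hiff : (Fin.castLE hrm i = Fin.castLE hrm j) ↔ (i = j) :=
      ⟨fun hc => hinj hc, fun hc => by rw [hc]⟩
    simp only [Matrix.mul_apply, Matrix.transpose_apply, Matrix.one_apply, Matrix.of_apply]
    rw [Finset.sum_congr rfl fun _ _ => mul_comm _ _, this]
    simp [hiff]
  · ext k i
    rw [Matrix.mul_diagonal, Matrix.of_apply]
    by_cases hσ : σ i = 0
    · simp [hσ, hzero i hσ k]
    · have hmem : Fin.castLE hrm i ∈ s := ⟨i, hσ, rfl⟩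
      have := hb _ hmem
      rw [this, hvu]
      show C k i = (Real.sqrt (σ i))⁻¹ * C k i * Real.sqrt (σ i)
      have hs0 : Real.sqrt (σ i) ≠ 0 := by
        simp [Real.sqrt_eq_zero (hnn i)]; exact hσ
      field_simp

/-- If AᵀA = BᵀB then there is a compact SVD ABᵀ = U Σ Vᵀ and an orthonormal
matrix W with A = U Σ^{1/2} Wᵀ and B = V Σ^{1/2} Wᵀ. -/
theorem stmt0 {m n r : ℕ} (hrm : r ≤ m) (hrn : r ≤ n)
    (A : Matrix (Fin m) (Fin r) ℝ) (B : Matrix (Fin n) (Fin r) ℝ)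
    (hAB : Aᵀ * A = Bᵀ * B) :
    ∃ (U : Matrix (Fin m) (Fin r) ℝ) (V : Matrix (Fin n) (Fin r) ℝ)
      (σ : Fin r → ℝ) (W : Matrix (Fin r) (Fin r) ℝ),
      Uᵀ * U = 1 ∧ Vᵀ * V = 1 ∧ (∀ i, 0 ≤ σ i) ∧ Wᵀ * W = 1 ∧
      A * Bᵀ = U * Matrix.diagonal σ * Vᵀ ∧
      A = U * Matrix.diagonal (fun i => Real.sqrt (σ i)) * Wᵀ ∧
      B = V * Matrix.diagonal (fun i => Real.sqrt (σ i)) * Wᵀ := by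
  have hM : (Aᵀ * A).IsHermitian := Matrix.isHermitian_conjTranspose_mul_self A
  set σ : Fin r → ℝ := hM.eigenvalues with hσdef
  set W : Matrix (Fin r) (Fin r) ℝ :=
    (Matrix.IsHermitian.eigenvectorUnitary hM : Matrix (Fin r) (Fin r) ℝ) with hWdef
  have hstar : star W = Wᵀ := by
    rw [Matrix.star_eq_conjTranspose]; ext i j; simp
  have hofr : (RCLike.ofReal ∘ σ : Fin r → ℝ) = σ := by ext i; simp
  have hspec : Aᵀ * A = W * Matrix.diagonal σ * Wᵀ := by
    conv_lhs => rw [hM.spectral_theorem, Unitary.conjStarAlgAut_apply]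
    rw [← hWdef, ← hσdef, hofr, hstar]
  have hWmem := (Matrix.IsHermitian.eigenvectorUnitary hM).2
  rw [Unitary.mem_iff] at hWmem
  have hW1 : Wᵀ * W = 1 := by rw [← hstar]; exact hWmem.1
  have hW2 : W * Wᵀ = 1 := by rw [← hstar]; exact hWmem.2
  have hAW : (A * W)ᵀ * (A * W) = Matrix.diagonal σ := by
    rw [Matrix.transpose_mul, Matrix.mul_assoc, ← Matrix.mul_assoc Aᵀ, hspec]
    simp only [Matrix.mul_assoc]
    rw [hW1, Matrix.mul_one, ← Matrix.mul_assoc, hW1, Matrix.one_mul]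
  have hBW : (B * W)ᵀ * (B * W) = Matrix.diagonal σ := by
    rw [Matrix.transpose_mul, Matrix.mul_assoc, ← Matrix.mul_assoc Bᵀ, ← hAB, hspec]
    simp only [Matrix.mul_assoc]
    rw [hW1, Matrix.mul_one, ← Matrix.mul_assoc, hW1, Matrix.one_mul]
  have hnn : ∀ i, 0 ≤ σ i := by
    intro i
    have := congrFun (congrFun hAW i) i
    simp only [Matrix.mul_apply, Matrix.transpose_apply, Matrix.diagonal_apply_eq] at this
    rw [← this]
    exact Finset.sum_nonneg fun k _ => mul_self_nonneg _
  obtain ⟨U, hU1, hU2⟩ := colfac hrm (A * W) σ hAW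
  obtain ⟨V, hV1, hV2⟩ := colfac hrn (B * W) σ hBW
  have hA : A = U * Matrix.diagonal (fun i => Real.sqrt (σ i)) * Wᵀ := by
    rw [← hU2, Matrix.mul_assoc, hW2, Matrix.mul_one]
  have hB : B = V * Matrix.diagonal (fun i => Real.sqrt (σ i)) * Wᵀ := by
    rw [← hV2, Matrix.mul_assoc, hW2, Matrix.mul_one]
  refine ⟨U, V, σ, W, hU1, hV1, hnn, hW1, ?_, hA, hB⟩
  conv_lhs => rw [hA, hB]
  rw [Matrix.transpose_mul, Matrix.transpose_mul, Matrix.transpose_transpose,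
    Matrix.diagonal_transpose]
  simp only [Matrix.mul_assoc]
  rw [← Matrix.mul_assoc Wᵀ W, hW1, Matrix.one_mul,
    ← Matrix.mul_assoc (Matrix.diagonal _) (Matrix.diagonal _),
    Matrix.diagonal_mul_diagonal,
    show (fun i => Real.sqrt (σ i) * Real.sqrt (σ i)) = σ from
      funext fun i => Real.mul_self_sqrt (hnn i)]
end

section
/- Let U ∈ ℝ^{m×r} and V ∈ ℝ^{n×r} have orthonormal columns, and let X ∈ ℝ^{m×n} satisfy XV = U and XᵀU = V. Then X = UVᵀ + Ũ Σ Ṽᵀ, where Ũ ∈ ℝ^{m×(m−r)} is an orthonormal basis of the orthogonal complement of the column space of U, Ṽ ∈ ℝ^{n×(n−r)} is an orthonormal basis of the orthogonal complement of the column space of V, and Σ ∈ ℝ^{(m−r)×(n−r)} is a rectangular diagonal matrix. -/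
open Matrix BigOperators

lemma exists_perm_filter {N : ℕ} (p : Fin N → Prop) [DecidablePred p] :
    ∃ π : Equiv.Perm (Fin N), ∀ j, p (π j) ↔ (j : ℕ) < (Finset.univ.filter p).card := by
  classical
  set s := Finset.univ.filter p with hs
  set k := s.card with hk
  have hkN : k ≤ N := by
    simpa using Finset.card_le_card (Finset.subset_univ s)
  have hcompl : sᶜ.card = N - k := by
    rw [Finset.card_compl]; simp [hk]
  let e1 : Fin N ≃ Fin (k + (N - k)) := finCongr (by omega)
  let e2 : Fin (k + (N - k)) ≃ Fin k ⊕ Fin (N - k) := finSumFinEquiv.symm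
  let e3 : Fin k ⊕ Fin (N - k) ≃ ↥s ⊕ ↥sᶜ :=
    Equiv.sumCongr (s.orderIsoOfFin rfl).toEquiv (sᶜ.orderIsoOfFin hcompl).toEquiv
  let e4 : ↥s ⊕ ↥sᶜ ≃ Fin N :=
    (Equiv.sumCongr (Equiv.subtypeEquivRight (fun x => by simp [hs]))
      (Equiv.subtypeEquivRight (fun x => by simp [hs]))).trans (Equiv.sumCompl p)
  refine ⟨(((e1.trans e2).trans e3).trans e4), ?_⟩
  intro j
  have he4l : ∀ x : ↥s, e4 (Sum.inl x) = (x : Fin N) := fun x => rfl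
  have he4r : ∀ x : ↥sᶜ, e4 (Sum.inr x) = (x : Fin N) := fun x => rfl
  by_cases hj : (j : ℕ) < k
  · have h1 : e1 j = Fin.castAdd (N - k) ⟨j, hj⟩ := by ext; simp [e1]
    have h2 : e2 (Fin.castAdd (N - k) ⟨j, hj⟩) = Sum.inl ⟨j, hj⟩ :=
      finSumFinEquiv_symm_apply_castAdd _
    simp only [Equiv.trans_apply, h1, h2, e3, Equiv.sumCongr_apply, Sum.map_inl, he4l]
    have := ((s.orderIsoOfFin rfl) ⟨j, hj⟩).2
    exact iff_of_true (Finset.mem_filter.mp this).2 hj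
  · have hj' : (j : ℕ) - k < N - k := by omega
    have h1 : e1 j = Fin.natAdd k ⟨(j : ℕ) - k, hj'⟩ := by ext; simp [e1]; omega
    have h2 : e2 (Fin.natAdd k ⟨(j : ℕ) - k, hj'⟩) = Sum.inr ⟨(j : ℕ) - k, hj'⟩ :=
      finSumFinEquiv_symm_apply_natAdd _
    simp only [Equiv.trans_apply, h1, h2, e3, Equiv.sumCongr_apply, Sum.map_inr, he4r]
    have := ((sᶜ.orderIsoOfFin hcompl) ⟨(j : ℕ) - k, hj'⟩).2
    rw [Finset.mem_compl] at this
    exact iff_of_false (fun h => this (Finset.mem_filter.mpr ⟨Finset.mem_univ _, h⟩)) hj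

lemma inner_eu {N : ℕ} (x y : EuclideanSpace ℝ (Fin N)) :
    (inner ℝ x y : ℝ) = ∑ a, x a * y a := by
  simp [PiLp.inner_apply]
  exact Finset.sum_congr rfl (fun _ _ => mul_comm _ _)

set_option maxHeartbeats 4000000 in
/-- If XV = U and XᵀU = V for orthonormal-column U, V, then
X = UVᵀ + Ũ Σ Ṽᵀ with Ũ, Ṽ orthonormal bases of the orthogonal complements
and Σ rectangular diagonal. -/
theorem stmt1 {m n r : ℕ}
    (U : Matrix (Fin m) (Fin r) ℝ) (V : Matrix (Fin n) (Fin r) ℝ)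
    (X : Matrix (Fin m) (Fin n) ℝ)
    (hU : Uᵀ * U = 1) (hV : Vᵀ * V = 1)
    (hXV : X * V = U) (hXU : Xᵀ * U = V) :
    ∃ (Ut : Matrix (Fin m) (Fin (m - r)) ℝ) (Vt : Matrix (Fin n) (Fin (n - r)) ℝ)
      (S : Matrix (Fin (m - r)) (Fin (n - r)) ℝ),
      Utᵀ * Ut = 1 ∧ Utᵀ * U = 0 ∧ Vtᵀ * Vt = 1 ∧ Vtᵀ * V = 0 ∧
      (∀ (i : Fin (m - r)) (j : Fin (n - r)), (i : ℕ) ≠ (j : ℕ) → S i j = 0) ∧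
      X = U * Vᵀ + Ut * S * Vtᵀ := by
  classical
  set Y : Matrix (Fin m) (Fin n) ℝ := X - U * Vᵀ with hYdef
  have hYV : Y * V = 0 := by
    simp only [hYdef, Matrix.sub_mul, hXV, Matrix.mul_assoc, hV, Matrix.mul_one, sub_self]
  have hUY : Uᵀ * Y = 0 := by
    have hUX : Uᵀ * X = Vᵀ := by
      have := congrArg Matrix.transpose hXU
      simpa [Matrix.transpose_mul] using this
    simp only [hYdef, Matrix.mul_sub, hUX, ← Matrix.mul_assoc, hU, Matrix.one_mul, sub_self]
  have hYU : Yᵀ * U = 0 := by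
    have := congrArg Matrix.transpose hUY
    simpa [Matrix.transpose_mul] using this
  -- column families
  set u : Fin r → EuclideanSpace ℝ (Fin m) := fun i => WithLp.toLp 2 (fun a => U a i) with hu_def
  set v : Fin r → EuclideanSpace ℝ (Fin n) := fun j => WithLp.toLp 2 (fun a => V a j) with hv_def
  have hu_on : Orthonormal ℝ u := by
    rw [orthonormal_iff_ite]
    intro i j
    have h := congrFun (congrFun hU i) j
    simp only [Matrix.mul_apply, Matrix.transpose_apply, Matrix.one_apply] at h
    rw [inner_eu]
    simpa using h
  have hv_on : Orthonormal ℝ v := by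
    rw [orthonormal_iff_ite]
    intro i j
    have h := congrFun (congrFun hV i) j
    simp only [Matrix.mul_apply, Matrix.transpose_apply, Matrix.one_apply] at h
    rw [inner_eu]
    simpa using h
  -- orthogonal complements
  set Wu : Submodule ℝ (EuclideanSpace ℝ (Fin m)) := (Submodule.span ℝ (Set.range u))ᗮ with hWu_def
  set Wv : Submodule ℝ (EuclideanSpace ℝ (Fin n)) := (Submodule.span ℝ (Set.range v))ᗮ with hWv_def
  have hmemWu : ∀ z : EuclideanSpace ℝ (Fin m), z ∈ Wu ↔ ∀ i, (inner ℝ (u i) z : ℝ) = 0 := by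
    intro z
    rw [hWu_def, Submodule.mem_orthogonal]
    constructor
    · intro h i; exact h _ (Submodule.subset_span ⟨i, rfl⟩)
    · intro h x hx
      induction hx using Submodule.span_induction with
      | mem x hx => obtain ⟨i, rfl⟩ := hx; exact h i
      | zero => simp
      | add a b _ _ ha hb => rw [inner_add_left, ha, hb, add_zero]
      | smul c a _ ha => rw [real_inner_smul_left, ha, mul_zero]
  have hmemWv : ∀ z : EuclideanSpace ℝ (Fin n), z ∈ Wv ↔ ∀ i, (inner ℝ (v i) z : ℝ) = 0 := by
    intro z
    rw [hWv_def, Submodule.mem_orthogonal]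
    constructor
    · intro h i; exact h _ (Submodule.subset_span ⟨i, rfl⟩)
    · intro h x hx
      induction hx using Submodule.span_induction with
      | mem x hx => obtain ⟨i, rfl⟩ := hx; exact h i
      | zero => simp
      | add a b _ _ ha hb => rw [inner_add_left, ha, hb, add_zero]
      | smul c a _ ha => rw [real_inner_smul_left, ha, mul_zero]
  -- dimensions
  have hEm : Module.finrank ℝ (EuclideanSpace ℝ (Fin m)) = m := by simp
  have hEn : Module.finrank ℝ (EuclideanSpace ℝ (Fin n)) = n := by simp
  have hspanU_rank : Module.finrank ℝ (Submodule.span ℝ (Set.range u)) = r := by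
    rw [finrank_span_eq_card hu_on.linearIndependent]; simp
  have hspanV_rank : Module.finrank ℝ (Submodule.span ℝ (Set.range v)) = r := by
    rw [finrank_span_eq_card hv_on.linearIndependent]; simp
  have hsumU := Submodule.finrank_add_finrank_orthogonal
    (K := Submodule.span ℝ (Set.range u))
  have hsumV := Submodule.finrank_add_finrank_orthogonal
    (K := Submodule.span ℝ (Set.range v))
  rw [hspanU_rank, hEm] at hsumU
  rw [hspanV_rank, hEn] at hsumV
  have hrm : r ≤ m := by omega
  have hrn : r ≤ n := by omega
  have hWu_rank : Module.finrank ℝ Wu = m - r := by rw [hWu_def]; omega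
  have hWv_rank : Module.finrank ℝ Wv = n - r := by rw [hWv_def]; omega
  -- the operator YᵀY restricted to Wv
  set A : EuclideanSpace ℝ (Fin n) →ₗ[ℝ] EuclideanSpace ℝ (Fin n) :=
    Matrix.toEuclideanLin (Yᵀ * Y) with hA_def
  have hA_apply : ∀ (x : EuclideanSpace ℝ (Fin n)) (a : Fin n),
      A x a = ((Yᵀ * Y) *ᵥ x) a := fun x a => rfl
  have hinner_Y : ∀ (x y : EuclideanSpace ℝ (Fin n)),
      (inner ℝ x (A y) : ℝ) = ∑ c, (Y *ᵥ x) c * (Y *ᵥ y) c := by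
    intro x y
    rw [inner_eu]
    have : ∀ a, A y a = ((Yᵀ *ᵥ (Y *ᵥ y)) a) := by
      intro a; rw [hA_apply, ← Matrix.mulVec_mulVec]
    calc (∑ a, x a * A y a) = ∑ a, x a * (Yᵀ *ᵥ (Y *ᵥ y)) a := by
          simp_rw [this]
      _ = (fun a => x a) ⬝ᵥ (Yᵀ *ᵥ (Y *ᵥ y)) := rfl
      _ = ((fun a => x a) ᵥ* Yᵀ) ⬝ᵥ (Y *ᵥ y) := Matrix.dotProduct_mulVec _ _ _
      _ = (Y *ᵥ x) ⬝ᵥ (Y *ᵥ y) := by rw [Matrix.vecMul_transpose]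
      _ = ∑ c, (Y *ᵥ x) c * (Y *ᵥ y) c := rfl
  have hYv : ∀ j, Y *ᵥ (v j) = 0 := by
    intro j; funext c
    have h := congrFun (congrFun hYV c) j
    simp only [Matrix.mul_apply, Matrix.zero_apply] at h
    simpa [Matrix.mulVec, dotProduct, hv_def] using h
  have hYmemWu : ∀ x : EuclideanSpace ℝ (Fin n), (WithLp.toLp 2 (Y *ᵥ x) : EuclideanSpace ℝ (Fin m)) ∈ Wu := by
    intro x
    rw [hmemWu]
    intro i
    rw [inner_eu]
    have hYtu : ∀ a, (Yᵀ *ᵥ (u i)) a = 0 := by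
      intro a
      have h := congrFun (congrFun hYU a) i
      simp only [Matrix.mul_apply, Matrix.zero_apply] at h
      simpa [Matrix.mulVec, dotProduct, hu_def] using h
    calc (∑ a, u i a * (Y *ᵥ x) a) = (fun a => u i a) ⬝ᵥ (Y *ᵥ x) := rfl
      _ = ((fun a => u i a) ᵥ* Y) ⬝ᵥ (fun a => x a) := Matrix.dotProduct_mulVec _ _ _
      _ = (Yᵀ *ᵥ (u i)) ⬝ᵥ (fun a => x a) := by
            rw [← Matrix.vecMul_transpose, Matrix.transpose_transpose]
      _ = 0 := by simp [dotProduct, hYtu]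
  have hAmem : ∀ x : EuclideanSpace ℝ (Fin n), A x ∈ Wv := by
    intro x
    rw [hmemWv]
    intro j
    rw [hinner_Y, hYv j]
    simp
  set S : Wv →ₗ[ℝ] Wv := (A.domRestrict Wv).codRestrict Wv (fun x => hAmem x) with hS_def
  have hS_coe : ∀ x : Wv, ((S x : Wv) : EuclideanSpace ℝ (Fin n)) = A (x : EuclideanSpace ℝ (Fin n)) :=
    fun x => rfl
  have hS_sym : S.IsSymmetric := by
    intro x y
    rw [Submodule.coe_inner, Submodule.coe_inner, hS_coe, hS_coe]
    have h1 : (inner ℝ (A (x : EuclideanSpace ℝ (Fin n))) (y : EuclideanSpace ℝ (Fin n)) : ℝ)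
        = inner ℝ ((y : EuclideanSpace ℝ (Fin n))) (A (x : EuclideanSpace ℝ (Fin n))) :=
      real_inner_comm _ _
    rw [h1, hinner_Y, hinner_Y]
    exact Finset.sum_congr rfl (fun c _ => mul_comm _ _)
  haveI : FiniteDimensional ℝ Wv := inferInstance
  set e0 : OrthonormalBasis (Fin (n - r)) ℝ Wv := hS_sym.eigenvectorBasis hWv_rank with he0_def
  set μ : Fin (n - r) → ℝ := hS_sym.eigenvalues hWv_rank with hμ_def
  have heig : ∀ j, S (e0 j) = μ j • e0 j := fun j => hS_sym.apply_eigenvectorBasis hWv_rank j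
  have hkey : ∀ i j, (∑ c, (Y *ᵥ ((e0 i : Wv) : EuclideanSpace ℝ (Fin n))) c *
      (Y *ᵥ ((e0 j : Wv) : EuclideanSpace ℝ (Fin n))) c) = if i = j then μ j else 0 := by
    intro i j
    rw [← hinner_Y]
    have : A ((e0 j : Wv) : EuclideanSpace ℝ (Fin n)) = μ j • ((e0 j : Wv) : EuclideanSpace ℝ (Fin n)) := by
      rw [← hS_coe, heig j]; rfl
    rw [this, real_inner_smul_right]
    have horth := orthonormal_iff_ite.mp e0.orthonormal i j
    rw [← Submodule.coe_inner] at *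
    rw [horth]
    by_cases h : i = j <;> simp [h]
  -- nonzero images
  set p : Fin (n - r) → Prop :=
    fun j => Y *ᵥ ((e0 j : Wv) : EuclideanSpace ℝ (Fin n)) ≠ 0 with hp_def
  set k := (Finset.univ.filter p).card with hk_def
  obtain ⟨π, hπ⟩ := exists_perm_filter p
  haveI : FiniteDimensional ℝ Wu := inferInstance
  have hk_le : k ≤ m - r := by
    set g : {j // j ∈ Finset.univ.filter p} → Wu := fun j =>
      ‖(⟨WithLp.toLp 2 (Y *ᵥ ((e0 j : Wv) : EuclideanSpace ℝ (Fin n))), hYmemWu _⟩ : Wu)‖⁻¹ •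
        (⟨WithLp.toLp 2 (Y *ᵥ ((e0 j : Wv) : EuclideanSpace ℝ (Fin n))), hYmemWu _⟩ : Wu) with hg_def
    have hz_inner : ∀ (i j : Fin (n - r)),
        (inner ℝ ((⟨WithLp.toLp 2 (Y *ᵥ ((e0 i : Wv) : EuclideanSpace ℝ (Fin n))), hYmemWu _⟩ : Wu))
          ((⟨WithLp.toLp 2 (Y *ᵥ ((e0 j : Wv) : EuclideanSpace ℝ (Fin n))), hYmemWu _⟩ : Wu)) : ℝ)
        = if i = j then μ j else 0 := by
      intro i j
      rw [Submodule.coe_inner, inner_eu]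
      exact hkey i j
    have hg_on : Orthonormal ℝ g := by
      rw [orthonormal_iff_ite]
      intro i j
      rw [hg_def]
      simp only [real_inner_smul_left, real_inner_smul_right]
      rw [hz_inner]
      by_cases h : i = j
      · subst h
        have hpi : p (i : Fin (n - r)) := (Finset.mem_filter.mp i.2).2
        have hne : (⟨WithLp.toLp 2 (Y *ᵥ ((e0 i : Wv) : EuclideanSpace ℝ (Fin n))), hYmemWu _⟩ : Wu) ≠ 0 := by
          intro hcon
          apply hpi
          have := congrArg (Subtype.val) hcon
          simpa using this
        have hnorm : ‖(⟨WithLp.toLp 2 (Y *ᵥ ((e0 (i : Fin (n - r)) : Wv) : EuclideanSpace ℝ (Fin n))),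
            hYmemWu _⟩ : Wu)‖ ≠ 0 := norm_ne_zero_iff.mpr hne
        have hself : (inner ℝ ((⟨WithLp.toLp 2 (Y *ᵥ ((e0 (i : Fin (n-r)) : Wv) : EuclideanSpace ℝ (Fin n))), hYmemWu _⟩ : Wu))
            ((⟨WithLp.toLp 2 (Y *ᵥ ((e0 (i : Fin (n-r)) : Wv) : EuclideanSpace ℝ (Fin n))), hYmemWu _⟩ : Wu)) : ℝ)
            = μ (i : Fin (n - r)) := by rw [hz_inner]; simp
        have hμi : μ (i : Fin (n - r)) =
            ‖(⟨WithLp.toLp 2 (Y *ᵥ ((e0 (i : Fin (n-r)) : Wv) : EuclideanSpace ℝ (Fin n))), hYmemWu _⟩ : Wu)‖ ^ 2 := by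
          rw [← hself, real_inner_self_eq_norm_sq]
        rw [if_pos rfl, if_pos rfl, hμi, pow_two]
        field_simp
      · have hij : (i : Fin (n - r)) ≠ (j : Fin (n - r)) := fun hc => h (Subtype.ext hc)
        rw [if_neg hij, if_neg h]
        ring
    have hcard := hg_on.linearIndependent.fintype_card_le_finrank
    rw [Fintype.card_coe] at hcard
    omega
  -- permuted eigen family
  set et : Fin (n - r) → Wv := fun j => e0 (π j) with het_def
  have het_on : Orthonormal ℝ et := e0.orthonormal.comp π π.injective
  have hkey' : ∀ i j, (∑ c, (Y *ᵥ ((et i : Wv) : EuclideanSpace ℝ (Fin n))) c *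
      (Y *ᵥ ((et j : Wv) : EuclideanSpace ℝ (Fin n))) c)
      = if i = j then μ (π j) else 0 := by
    intro i j
    rw [het_def]
    simp only []
    rw [hkey (π i) (π j)]
    by_cases h : i = j
    · simp [h]
    · rw [if_neg (fun hc => h (π.injective hc)), if_neg h]
  have hp' : ∀ j, Y *ᵥ ((et j : Wv) : EuclideanSpace ℝ (Fin n)) ≠ 0 ↔ (j : ℕ) < k :=
    fun j => hπ j
  -- the candidate left singular vectors
  set zfun : ∀ i : Fin (m - r), (i : ℕ) < n - r → Wu := fun i h =>
    (⟨WithLp.toLp 2 (Y *ᵥ ((et ⟨(i : ℕ), h⟩ : Wv) : EuclideanSpace ℝ (Fin n))), hYmemWu _⟩ : Wu) with hzfun_def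
  have hz_inner' : ∀ (i j : Fin (m - r)) (hi : (i : ℕ) < n - r) (hj : (j : ℕ) < n - r),
      (inner ℝ (zfun i hi) (zfun j hj) : ℝ)
        = if ((⟨(i : ℕ), hi⟩ : Fin (n - r)) = ⟨(j : ℕ), hj⟩) then μ (π ⟨(j : ℕ), hj⟩) else 0 := by
    intro i j hi hj
    rw [hzfun_def]
    rw [Submodule.coe_inner, inner_eu]
    exact hkey' _ _
  set w : Fin (m - r) → Wu := fun i =>
    if h : ∃ hlt : (i : ℕ) < n - r,
        Y *ᵥ ((et ⟨(i : ℕ), hlt⟩ : Wv) : EuclideanSpace ℝ (Fin n)) ≠ 0 then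
      ‖zfun i h.choose‖⁻¹ • zfun i h.choose
    else 0 with hw_def
  set s' : Set (Fin (m - r)) := {i | ∃ hlt : (i : ℕ) < n - r,
      Y *ᵥ ((et ⟨(i : ℕ), hlt⟩ : Wv) : EuclideanSpace ℝ (Fin n)) ≠ 0} with hs'_def
  have hw_spec : ∀ (i : Fin (m - r)) (h : (i : ℕ) < n - r),
      Y *ᵥ ((et ⟨(i : ℕ), h⟩ : Wv) : EuclideanSpace ℝ (Fin n)) ≠ 0 →
      w i = ‖zfun i h‖⁻¹ • zfun i h := by
    intro i h hne
    exact dif_pos ⟨h, hne⟩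
  have hw_on : Orthonormal ℝ (s'.restrict w) := by
    rw [orthonormal_iff_ite]
    rintro ⟨i, hi1, hi2⟩ ⟨j, hj1, hj2⟩
    show (inner ℝ (w i) (w j) : ℝ) = _
    rw [hw_spec i hi1 hi2, hw_spec j hj1 hj2]
    simp only [real_inner_smul_left, real_inner_smul_right]
    rw [hz_inner']
    by_cases h : i = j
    · subst h
      have hzne : zfun i hi1 ≠ 0 := by
        intro hcon
        apply hi2
        have := congrArg (Subtype.val) hcon
        rw [hzfun_def] at this
        simpa using this
      have hself : (inner ℝ (zfun i hi1) (zfun i hi1) : ℝ) = μ (π ⟨(i : ℕ), hi1⟩) := by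
        rw [hz_inner']; simp
      have hμi : μ (π ⟨(i : ℕ), hi1⟩) = ‖zfun i hi1‖ ^ 2 := by
        rw [← hself, real_inner_self_eq_norm_sq]
      rw [if_pos rfl, if_pos rfl, hμi, pow_two]
      have hn0 : ‖zfun i hi1‖ ≠ 0 := norm_ne_zero_iff.mpr hzne
      field_simp
    · have h1 : ((⟨(i : ℕ), hi1⟩ : Fin (n - r)) ≠ ⟨(j : ℕ), hj1⟩) := by
        intro hc
        exact h (Fin.ext (by simpa using congrArg Fin.val hc))
      have h2 : (⟨i, hi1, hi2⟩ : ↥s') ≠ ⟨j, hj1, hj2⟩ := by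
        intro hc; exact h (by simpa using congrArg Subtype.val hc)
      rw [if_neg h1, if_neg h2]
      ring
  have hcard' : Module.finrank ℝ Wu = Fintype.card (Fin (m - r)) := by
    simp [hWu_rank]
  obtain ⟨b, hb⟩ := hw_on.exists_orthonormalBasis_extension_of_card_eq hcard'
  -- the matrices
  set Ut : Matrix (Fin m) (Fin (m - r)) ℝ :=
    fun a i => ((b i : Wu) : EuclideanSpace ℝ (Fin m)) a with hUt_def
  set Vt : Matrix (Fin n) (Fin (n - r)) ℝ :=
    fun a j => ((et j : Wv) : EuclideanSpace ℝ (Fin n)) a with hVt_def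
  set Sm : Matrix (Fin (m - r)) (Fin (n - r)) ℝ := Utᵀ * (Y * Vt) with hSm_def
  have hSm_entry : ∀ i j, Sm i j = ∑ a, ((b i : Wu) : EuclideanSpace ℝ (Fin m)) a *
      (Y *ᵥ ((et j : Wv) : EuclideanSpace ℝ (Fin n))) a := by
    intro i j
    simp only [hSm_def, Matrix.mul_apply, Matrix.transpose_apply, hUt_def, hVt_def,
      Matrix.mulVec, dotProduct]
    rfl
  have hsingle : ∀ {N : ℕ} (y : EuclideanSpace ℝ (Fin N)) (t : Fin N),
      (inner ℝ y (EuclideanSpace.single t (1:ℝ)) : ℝ) = y t := by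
    intro N y t
    rw [inner_eu]
    simp [EuclideanSpace.single_apply]
  refine ⟨Ut, Vt, Sm, ?_, ?_, ?_, ?_, ?_, ?_⟩
  · -- Utᵀ * Ut = 1
    ext i j
    have hones : (inner ℝ (b i) (b j) : ℝ) = if i = j then 1 else 0 :=
      orthonormal_iff_ite.mp b.orthonormal i j
    rw [Submodule.coe_inner, inner_eu] at hones
    simp only [Matrix.mul_apply, Matrix.transpose_apply, hUt_def, Matrix.one_apply]
    exact hones
  · -- Utᵀ * U = 0
    ext i j
    have hz : (inner ℝ (u j) ((b i : Wu) : EuclideanSpace ℝ (Fin m)) : ℝ) = 0 :=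
      (hmemWu _).mp (b i).2 j
    rw [inner_eu] at hz
    simp only [Matrix.mul_apply, Matrix.transpose_apply, hUt_def, Matrix.zero_apply, hu_def]
    rw [← hz]
    exact Finset.sum_congr rfl (fun a _ => mul_comm _ _)
  · -- Vtᵀ * Vt = 1
    ext i j
    have hones : (inner ℝ (et i) (et j) : ℝ) = if i = j then 1 else 0 :=
      orthonormal_iff_ite.mp het_on i j
    rw [Submodule.coe_inner, inner_eu] at hones
    simp only [Matrix.mul_apply, Matrix.transpose_apply, hVt_def, Matrix.one_apply]
    exact hones
  · -- Vtᵀ * V = 0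
    ext i j
    have hz : (inner ℝ (v j) ((et i : Wv) : EuclideanSpace ℝ (Fin n)) : ℝ) = 0 :=
      (hmemWv _).mp (et i).2 j
    rw [inner_eu] at hz
    simp only [Matrix.mul_apply, Matrix.transpose_apply, hVt_def, Matrix.zero_apply, hv_def]
    rw [← hz]
    exact Finset.sum_congr rfl (fun a _ => mul_comm _ _)
  · -- Σ rectangular diagonal
    intro i j hij
    rw [hSm_entry]
    by_cases hz : Y *ᵥ ((et j : Wv) : EuclideanSpace ℝ (Fin n)) = 0
    · simp [hz]
    · have hjk : (j : ℕ) < k := (hp' j).mp hz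
      have hjm : (j : ℕ) < m - r := lt_of_lt_of_le hjk hk_le
      set i₀ : Fin (m - r) := ⟨(j : ℕ), hjm⟩ with hi₀_def
      have hfin : (⟨(i₀ : ℕ), j.isLt⟩ : Fin (n - r)) = j := Fin.ext rfl
      have hne0 : Y *ᵥ ((et ⟨(i₀ : ℕ), j.isLt⟩ : Wv) : EuclideanSpace ℝ (Fin n)) ≠ 0 := by
        rw [hfin]; exact hz
      have hi₀s : i₀ ∈ s' := ⟨j.isLt, hne0⟩
      have hbi₀ : b i₀ = w i₀ := hb i₀ hi₀s
      have hwi₀ : w i₀ = ‖zfun i₀ j.isLt‖⁻¹ • zfun i₀ j.isLt := hw_spec i₀ j.isLt hne0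
      have hcoe : ((zfun i₀ j.isLt : Wu) : EuclideanSpace ℝ (Fin m))
          = Y *ᵥ ((et j : Wv) : EuclideanSpace ℝ (Fin n)) := by
        rw [hzfun_def]
      have hz0 : zfun i₀ j.isLt ≠ 0 := by
        intro hc
        apply hz
        rw [← hcoe, hc, Submodule.coe_zero, WithLp.ofLp_zero]
      have hn : ‖zfun i₀ j.isLt‖ ≠ 0 := norm_ne_zero_iff.mpr hz0
      have hzb : zfun i₀ j.isLt = ‖zfun i₀ j.isLt‖ • b i₀ := by
        rw [hbi₀, hwi₀, smul_smul, mul_inv_cancel₀ hn, one_smul]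
      have hio : i ≠ i₀ := by
        intro hc
        exact hij (by rw [hc])
      have hbio : (inner ℝ (b i) (b i₀) : ℝ) = 0 := by
        have := orthonormal_iff_ite.mp b.orthonormal i i₀
        rwa [if_neg hio] at this
      calc (∑ a, ((b i : Wu) : EuclideanSpace ℝ (Fin m)) a *
            (Y *ᵥ ((et j : Wv) : EuclideanSpace ℝ (Fin n))) a)
          = inner ℝ ((b i : Wu) : EuclideanSpace ℝ (Fin m)) ((zfun i₀ j.isLt : Wu) : EuclideanSpace ℝ (Fin m)) := by
            rw [inner_eu, hcoe]
        _ = (inner ℝ (b i) (zfun i₀ j.isLt) : ℝ) := (Submodule.coe_inner _ _ _).symm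
        _ = 0 := by rw [hzb, real_inner_smul_right, hbio, mul_zero]
  · -- the decomposition
    -- completeness on the U side
    set cU : Fin r ⊕ Fin (m - r) → EuclideanSpace ℝ (Fin m) :=
      Sum.elim u (fun i => ((b i : Wu) : EuclideanSpace ℝ (Fin m))) with hcU_def
    have hcU_on : Orthonormal ℝ cU := by
      rw [orthonormal_iff_ite]
      rintro (i | i) (j | j) <;> simp only [hcU_def, Sum.elim_inl, Sum.elim_inr]
      · rw [orthonormal_iff_ite.mp hu_on i j]; simp
      · rw [(hmemWu _).mp (b j).2 i]; simp
      · rw [real_inner_comm, (hmemWu _).mp (b i).2 j]; simp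
      · have := orthonormal_iff_ite.mp b.orthonormal i j
        rw [Submodule.coe_inner] at this
        rw [this]; simp
    have hcardm : Module.finrank ℝ (EuclideanSpace ℝ (Fin m))
        = Fintype.card (Fin r ⊕ Fin (m - r)) := by
      simp [hEm]; omega
    have hcU_univ : Orthonormal ℝ ((Set.univ : Set (Fin r ⊕ Fin (m - r))).restrict cU) :=
      hcU_on.comp _ Subtype.val_injective
    obtain ⟨BU, hBU⟩ := hcU_univ.exists_orthonormalBasis_extension_of_card_eq hcardm
    have hcompU : ∀ a c : Fin m, (∑ i, U a i * U c i) + (∑ i, Ut a i * Ut c i)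
        = if a = c then 1 else 0 := by
      intro a c
      have hexp : (inner ℝ (EuclideanSpace.single a (1:ℝ)) (EuclideanSpace.single c (1:ℝ)) : ℝ)
          = ∑ i, (inner ℝ (BU i) (EuclideanSpace.single a (1:ℝ)) : ℝ) *
              (inner ℝ (BU i) (EuclideanSpace.single c (1:ℝ)) : ℝ) := by
        conv_lhs => rw [← BU.sum_repr (EuclideanSpace.single a (1:ℝ))]
        rw [sum_inner]
        refine Finset.sum_congr rfl fun i _ => ?_
        rw [real_inner_smul_left, BU.repr_apply_apply]
      rw [hsingle] at hexp
      simp only [hsingle] at hexp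
      have hBUc : ∀ i, BU i = cU i := fun i => hBU i (Set.mem_univ i)
      simp only [hBUc] at hexp
      rw [Fintype.sum_sum_type] at hexp
      simp only [hcU_def, Sum.elim_inl, Sum.elim_inr] at hexp
      rw [EuclideanSpace.single_apply] at hexp
      simp only [hu_def] at hexp
      simp only [hUt_def]
      rw [hexp.symm]
      by_cases h : a = c
      · subst h; simp
      · rw [if_neg (fun hc => h hc.symm), if_neg h]
    have hPu : U * Uᵀ + Ut * Utᵀ = 1 := by
      ext a c
      simp only [Matrix.add_apply, Matrix.mul_apply, Matrix.transpose_apply, Matrix.one_apply]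
      exact hcompU a c
    -- completeness on the V side
    set cV : Fin r ⊕ Fin (n - r) → EuclideanSpace ℝ (Fin n) :=
      Sum.elim v (fun j => ((et j : Wv) : EuclideanSpace ℝ (Fin n))) with hcV_def
    have hcV_on : Orthonormal ℝ cV := by
      rw [orthonormal_iff_ite]
      rintro (i | i) (j | j) <;> simp only [hcV_def, Sum.elim_inl, Sum.elim_inr]
      · rw [orthonormal_iff_ite.mp hv_on i j]; simp
      · rw [(hmemWv _).mp (et j).2 i]; simp
      · rw [real_inner_comm, (hmemWv _).mp (et i).2 j]; simp
      · have := orthonormal_iff_ite.mp het_on i j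
        rw [Submodule.coe_inner] at this
        rw [this]; simp
    have hcardn : Module.finrank ℝ (EuclideanSpace ℝ (Fin n))
        = Fintype.card (Fin r ⊕ Fin (n - r)) := by
      simp [hEn]; omega
    have hcV_univ : Orthonormal ℝ ((Set.univ : Set (Fin r ⊕ Fin (n - r))).restrict cV) :=
      hcV_on.comp _ Subtype.val_injective
    obtain ⟨BV, hBV⟩ := hcV_univ.exists_orthonormalBasis_extension_of_card_eq hcardn
    have hcompV : ∀ a c : Fin n, (∑ i, V a i * V c i) + (∑ i, Vt a i * Vt c i)
        = if a = c then 1 else 0 := by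
      intro a c
      have hexp : (inner ℝ (EuclideanSpace.single a (1:ℝ)) (EuclideanSpace.single c (1:ℝ)) : ℝ)
          = ∑ i, (inner ℝ (BV i) (EuclideanSpace.single a (1:ℝ)) : ℝ) *
              (inner ℝ (BV i) (EuclideanSpace.single c (1:ℝ)) : ℝ) := by
        conv_lhs => rw [← BV.sum_repr (EuclideanSpace.single a (1:ℝ))]
        rw [sum_inner]
        refine Finset.sum_congr rfl fun i _ => ?_
        rw [real_inner_smul_left, BV.repr_apply_apply]
      rw [hsingle] at hexp
      simp only [hsingle] at hexp
      have hBVc : ∀ i, BV i = cV i := fun i => hBV i (Set.mem_univ i)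
      simp only [hBVc] at hexp
      rw [Fintype.sum_sum_type] at hexp
      simp only [hcV_def, Sum.elim_inl, Sum.elim_inr] at hexp
      rw [EuclideanSpace.single_apply] at hexp
      simp only [hv_def] at hexp
      simp only [hVt_def]
      rw [hexp.symm]
      by_cases h : a = c
      · subst h; simp
      · rw [if_neg (fun hc => h hc.symm), if_neg h]
    have hPv : V * Vᵀ + Vt * Vtᵀ = 1 := by
      ext a c
      simp only [Matrix.add_apply, Matrix.mul_apply, Matrix.transpose_apply, Matrix.one_apply]
      exact hcompV a c
    have h2 : Ut * Utᵀ * Y = Y := by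
      have h := congrArg (fun M => M * Y) hPu
      simp only [Matrix.add_mul, Matrix.one_mul] at h
      rwa [Matrix.mul_assoc U, hUY, Matrix.mul_zero, zero_add] at h
    have h3 : Y * (Vt * Vtᵀ) = Y := by
      have h := congrArg (fun M => Y * M) hPv
      simp only [Matrix.mul_add, Matrix.mul_one] at h
      rwa [← Matrix.mul_assoc Y V, hYV, Matrix.zero_mul, zero_add] at h
    have h4 : Ut * Sm * Vtᵀ = Y := by
      rw [hSm_def]
      calc Ut * (Utᵀ * (Y * Vt)) * Vtᵀ = (Ut * Utᵀ * Y) * (Vt * Vtᵀ) := by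
            simp only [Matrix.mul_assoc]
        _ = Y := by rw [h2, h3]
    rw [h4, hYdef]
    abel
end

section
/- Let X ∈ ℝ^{m×n} with compact SVD X = L Σ Rᵀ, and let Z ∈ ℝ^{m×n} satisfy LᵀZ = 0 and ZR = 0 (so the column and row spaces of Z are orthogonal to those of X). Suppose ‖Z‖₂ ≤ σ_{r★}(X), where σ_{r★}(X) is the r★-th largest singular value of X. Then the best rank-r★ approximation of X − Z (in Frobenius norm) equals the best rank-r★ approximation of X; that is, Π_{rank ≤ r★}(X − Z) = Π_{rank ≤ r★}(X). -/
open Matrix BigOperators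
open Module

lemma exists_adaptedV {m n : ℕ} (Y : Matrix (Fin m) (Fin n) ℝ) (rs : ℕ) (hrs : rs ≤ n)
    (hrank : Y.rank ≤ rs) :
    ∃ V : Matrix (Fin n) (Fin n) ℝ, Vᵀ * V = 1 ∧
      ∀ j : Fin n, rs ≤ (j : ℕ) → Y.mulVec (fun i => V i j) = 0 := by
  classical
  set E := EuclideanSpace ℝ (Fin n) with hE
  let e := WithLp.linearEquiv 2 ℝ (Fin n → ℝ)
  let T : E →ₗ[ℝ] (Fin m → ℝ) := Y.mulVecLin ∘ₗ e.toLinearMap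
  have hrangeT : LinearMap.range T = LinearMap.range Y.mulVecLin := by
    apply LinearMap.range_comp_of_range_eq_top
    exact LinearEquiv.range e
  have hrn : finrank ℝ (LinearMap.range T) + finrank ℝ (LinearMap.ker T) = n := by
    rw [LinearMap.finrank_range_add_finrank_ker T]
    exact finrank_euclideanSpace_fin
  have hkerdim : n - rs ≤ finrank ℝ (LinearMap.ker T) := by
    have : finrank ℝ (LinearMap.range T) ≤ rs := by
      rw [hrangeT]; exact hrank
    omega
  set K := LinearMap.ker T with hK
  set d := finrank ℝ K with hd
  let bK := stdOrthonormalBasis ℝ K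
  have honK : Orthonormal ℝ (fun i : Fin d => ((bK i : K) : E)) :=
    bK.orthonormal.comp_linearIsometry K.subtypeₗᵢ
  let v : Fin n → E := fun j =>
    if h : rs ≤ (j : ℕ) then ((bK ⟨(j : ℕ) - rs, by omega⟩ : K) : E) else 0
  set s : Set (Fin n) := {j | rs ≤ (j : ℕ)} with hs
  have hv : Orthonormal ℝ (s.restrict v) := by
    have hinj : Function.Injective (fun j : s => (⟨((j : Fin n) : ℕ) - rs, by
        have h1 := (j : Fin n).isLt
        have h2 : rs ≤ ((j : Fin n) : ℕ) := j.2
        omega⟩ : Fin d)) := by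
      rintro ⟨j, hj⟩ ⟨j', hj'⟩ h
      have h' : (j : ℕ) - rs = (j' : ℕ) - rs := congrArg Fin.val h
      have hj2 : rs ≤ (j : ℕ) := hj
      have hj2' : rs ≤ (j' : ℕ) := hj'
      have hjj : (j : ℕ) = (j' : ℕ) := by omega
      exact Subtype.ext (Fin.ext hjj)
    have := honK.comp _ hinj
    convert this using 1
    funext j
    simp only [Set.restrict_apply, Function.comp_apply, v]
    exact dif_pos (show rs ≤ (((j : Fin n)) : ℕ) from j.2)
  obtain ⟨b, hb⟩ := hv.exists_orthonormalBasis_extension_of_card_eq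
    (by rw [Fintype.card_fin]; exact finrank_euclideanSpace_fin)
  refine ⟨Matrix.of fun i j => b j i, ?_, ?_⟩
  · ext j j'
    have := orthonormal_iff_ite.mp b.orthonormal j j'
    rw [PiLp.inner_apply] at this
    simpa [Matrix.mul_apply, Matrix.one_apply, Matrix.transpose_apply, mul_comm] using this
  · intro j hj
    have hjs : j ∈ s := hj
    have hbj : b j = v j := hb j hjs
    have hmem : v j ∈ K := by
      simp only [v, dif_pos hj]
      exact (bK ⟨(j : ℕ) - rs, by omega⟩).2
    rw [hK, LinearMap.mem_ker] at hmem
    have : T (b j) = 0 := by rw [hbj]; exact hmem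
    exact this

lemma Ftrace {m n : ℕ} (A : Matrix (Fin m) (Fin n) ℝ) :
    ∑ i, ∑ j, (A i j) ^ 2 = Matrix.trace (Aᵀ * A) := by
  rw [Finset.sum_comm]
  simp [Matrix.trace, Matrix.diag, Matrix.mul_apply, sq]

lemma mip_trace {m n : ℕ} (A B : Matrix (Fin m) (Fin n) ℝ) :
    ∑ i, ∑ j, A i j * B i j = Matrix.trace (Aᵀ * B) := by
  rw [Finset.sum_comm]
  simp [Matrix.trace, Matrix.diag, Matrix.mul_apply]

lemma Fadd {m n : ℕ} (A B : Matrix (Fin m) (Fin n) ℝ) :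
    ∑ i, ∑ j, ((A + B) i j) ^ 2
      = (∑ i, ∑ j, (A i j) ^ 2) + 2 * Matrix.trace (Aᵀ * B) + ∑ i, ∑ j, (B i j) ^ 2 := by
  rw [← mip_trace]
  have h : ∀ i j, ((A + B) i j) ^ 2
      = A i j ^ 2 + 2 * (A i j * B i j) + B i j ^ 2 := by
    intro i j; simp only [Matrix.add_apply]; ring
  simp_rw [h, Finset.sum_add_distrib, Finset.mul_sum]

lemma FV {m n : ℕ} (A : Matrix (Fin m) (Fin n) ℝ) (V : Matrix (Fin n) (Fin n) ℝ)
    (hV : Vᵀ * V = 1) :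
    ∑ i, ∑ j, ((A * V) i j) ^ 2 = ∑ i, ∑ j, (A i j) ^ 2 := by
  have hVV : V * Vᵀ = 1 := mul_eq_one_comm.mp hV
  rw [Ftrace, Ftrace]
  have h1 : (A * V)ᵀ * (A * V) = Vᵀ * ((Aᵀ * A) * V) := by
    rw [Matrix.transpose_mul]
    simp only [Matrix.mul_assoc]
  rw [h1, Matrix.trace_mul_comm, Matrix.mul_assoc, hVV, Matrix.mul_one]

lemma sandwich {m n r : ℕ} (L : Matrix (Fin m) (Fin r) ℝ) (R : Matrix (Fin n) (Fin r) ℝ)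
    (hL : Lᵀ * L = 1) (hR : Rᵀ * R = 1) (e : Fin r → ℝ) :
    ∑ i, ∑ j, ((L * Matrix.diagonal e * Rᵀ) i j) ^ 2 = ∑ i, e i ^ 2 := by
  rw [Ftrace]
  have h1 : (L * Matrix.diagonal e * Rᵀ)ᵀ * (L * Matrix.diagonal e * Rᵀ)
      = R * (Matrix.diagonal e * ((Lᵀ * L) * (Matrix.diagonal e * Rᵀ))) := by
    rw [Matrix.transpose_mul, Matrix.transpose_mul, Matrix.transpose_transpose,
      Matrix.diagonal_transpose]
    simp only [Matrix.mul_assoc]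
  rw [h1, hL, Matrix.one_mul, ← Matrix.mul_assoc (Matrix.diagonal e),
    Matrix.diagonal_mul_diagonal]
  rw [← Matrix.mul_assoc, Matrix.trace_mul_comm, ← Matrix.mul_assoc, hR, Matrix.one_mul]
  simp [Matrix.trace, Matrix.diag, sq]

lemma cross_zero {m n r : ℕ} (L : Matrix (Fin m) (Fin r) ℝ) (R : Matrix (Fin n) (Fin r) ℝ)
    (Z : Matrix (Fin m) (Fin n) ℝ) (hLZ : Lᵀ * Z = 0) (e : Fin r → ℝ) :
    Matrix.trace ((L * Matrix.diagonal e * Rᵀ)ᵀ * Z) = 0 := by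
  have h1 : (L * Matrix.diagonal e * Rᵀ)ᵀ * Z = R * (Matrix.diagonal e * (Lᵀ * Z)) := by
    rw [Matrix.transpose_mul, Matrix.transpose_mul, Matrix.transpose_transpose,
      Matrix.diagonal_transpose]
    simp only [Matrix.mul_assoc]
  rw [h1, hLZ]
  simp

lemma colbound {m n r : ℕ} (rs : ℕ) (hrs : 0 < rs) (hrsr : rs ≤ r)
    (L : Matrix (Fin m) (Fin r) ℝ) (R : Matrix (Fin n) (Fin r) ℝ)
    (σ : Fin r → ℝ) (Z : Matrix (Fin m) (Fin n) ℝ)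
    (hL : Lᵀ * L = 1) (hR : Rᵀ * R = 1)
    (hLZ : Lᵀ * Z = 0) (hZR : Z * R = 0)
    (hZ : ∀ v : Fin n → ℝ,
      ∑ i, (Z.mulVec v i) ^ 2 ≤ (σ ⟨rs - 1, Nat.lt_of_lt_of_le (Nat.sub_lt hrs Nat.one_pos) hrsr⟩) ^ 2 * ∑ j, (v j) ^ 2)
    (w : Fin n → ℝ) (hw : ∑ i, (w i) ^ 2 = 1) :
    ∑ i, ((L * Matrix.diagonal σ * Rᵀ - Z).mulVec w i) ^ 2
      ≤ (σ ⟨rs - 1, Nat.lt_of_lt_of_le (Nat.sub_lt hrs Nat.one_pos) hrsr⟩) ^ 2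
        + ∑ i, ((σ i) ^ 2 - (σ ⟨rs - 1, Nat.lt_of_lt_of_le (Nat.sub_lt hrs Nat.one_pos) hrsr⟩) ^ 2) * ((Rᵀ *ᵥ w) i) ^ 2 := by
  have hrr : rs - 1 < r := by omega
  set σs : ℝ := σ ⟨rs - 1, hrr⟩ with hσs
  set q : Fin r → ℝ := Rᵀ *ᵥ w with hq
  set p : Fin r → ℝ := Matrix.diagonal σ *ᵥ q with hp
  set a : Fin m → ℝ := L *ᵥ p with ha
  set c : Fin m → ℝ := Z *ᵥ w with hc
  have dotL : ∀ (x : Fin r → ℝ) (y : Fin m → ℝ), (L *ᵥ x) ⬝ᵥ y = x ⬝ᵥ (Lᵀ *ᵥ y) := by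
    intro x y
    rw [Matrix.dotProduct_mulVec, Matrix.vecMul_transpose]
  have dotR : ∀ (x : Fin r → ℝ) (y : Fin n → ℝ), (R *ᵥ x) ⬝ᵥ y = x ⬝ᵥ (Rᵀ *ᵥ y) := by
    intro x y
    rw [Matrix.dotProduct_mulVec, Matrix.vecMul_transpose]
  have hLnorm : ∀ x : Fin r → ℝ, (L *ᵥ x) ⬝ᵥ (L *ᵥ x) = x ⬝ᵥ x := by
    intro x
    rw [dotL, Matrix.mulVec_mulVec, hL, Matrix.one_mulVec]
  have hRnorm : ∀ x : Fin r → ℝ, (R *ᵥ x) ⬝ᵥ (R *ᵥ x) = x ⬝ᵥ x := by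
    intro x
    rw [dotR, Matrix.mulVec_mulVec, hR, Matrix.one_mulVec]
  have hXw : (L * Matrix.diagonal σ * Rᵀ) *ᵥ w = a := by
    rw [ha, hp, hq, Matrix.mulVec_mulVec, Matrix.mulVec_mulVec]
  have h0 : ∀ i, ((L * Matrix.diagonal σ * Rᵀ - Z) *ᵥ w) i = a i - c i := by
    intro i
    rw [Matrix.sub_mulVec, hXw]
    simp [hc]
  have hac : a ⬝ᵥ c = 0 := by
    rw [ha, dotL, hc, Matrix.mulVec_mulVec, hLZ, Matrix.zero_mulVec, dotProduct_zero]
  have ha2 : ∑ i, a i ^ 2 = ∑ i, (σ i * q i) ^ 2 := by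
    have h1 : ∑ i, a i ^ 2 = a ⬝ᵥ a := by simp [dotProduct, sq]
    rw [h1, ha, hLnorm]
    simp [dotProduct, hp, Matrix.mulVec_diagonal, sq]
  have hc2 : ∑ i, c i ^ 2 ≤ σs ^ 2 * (1 - ∑ i, q i ^ 2) := by
    set w' : Fin n → ℝ := w - R *ᵥ q with hw'
    have hZw' : Z *ᵥ w' = c := by
      rw [hw', Matrix.mulVec_sub, Matrix.mulVec_mulVec, hZR, Matrix.zero_mulVec, sub_zero]
    have hw'2 : ∑ i, w' i ^ 2 = 1 - ∑ i, q i ^ 2 := by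
      have e1 : ∑ i, w' i ^ 2 = w' ⬝ᵥ w' := by simp [dotProduct, sq]
      have e2 : w ⬝ᵥ (R *ᵥ q) = q ⬝ᵥ q := by
        rw [dotProduct_comm, dotR, hq]
      have e3 : (R *ᵥ q) ⬝ᵥ w = q ⬝ᵥ q := by
        rw [dotR, hq]
      have e4 : w ⬝ᵥ w = 1 := by rw [← hw]; simp [dotProduct, sq]
      have e5 : ∑ i, q i ^ 2 = q ⬝ᵥ q := by simp [dotProduct, sq]
      rw [e1, hw', sub_dotProduct, dotProduct_sub, dotProduct_sub,
        e2, e3, e4, hRnorm, e5]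
      ring
    have := hZ w'
    rw [hZw'] at this
    rw [hw'2] at this
    exact this
  have hexp : ∑ i, (a i - c i) ^ 2 = (∑ i, a i ^ 2) - 2 * (a ⬝ᵥ c) + ∑ i, c i ^ 2 := by
    simp only [dotProduct, Finset.mul_sum]
    rw [← Finset.sum_sub_distrib, ← Finset.sum_add_distrib]
    apply Finset.sum_congr rfl
    intro i _
    ring
  have halg : ∑ i, (σ i ^ 2 - σs ^ 2) * q i ^ 2
      = (∑ i, (σ i * q i) ^ 2) - σs ^ 2 * ∑ i, q i ^ 2 := by
    rw [Finset.mul_sum, ← Finset.sum_sub_distrib]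
    apply Finset.sum_congr rfl
    intro i _
    ring
  calc ∑ i, ((L * Matrix.diagonal σ * Rᵀ - Z).mulVec w i) ^ 2
      = ∑ i, (a i - c i) ^ 2 := by
        apply Finset.sum_congr rfl; intro i _; rw [h0]
    _ ≤ σs ^ 2 + ∑ i, (σ i ^ 2 - σs ^ 2) * q i ^ 2 := by
        rw [hexp, hac, halg, ha2]
        linarith

lemma card_filter_lt (N k : ℕ) (h : k ≤ N) :
    ((Finset.univ : Finset (Fin N)).filter (fun i : Fin N => (i : ℕ) < k)).card = k := by
  have himg : (((Finset.univ : Finset (Fin N)).filter (fun i : Fin N => (i : ℕ) < k)).image Fin.val)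
      = Finset.range k := by
    ext a
    simp only [Finset.mem_image, Finset.mem_filter, Finset.mem_univ, true_and, Finset.mem_range]
    constructor
    · rintro ⟨i, hi, rfl⟩; exact hi
    · intro ha; exact ⟨⟨a, lt_of_lt_of_le ha h⟩, ha, rfl⟩
  rw [← Finset.card_image_of_injective _ Fin.val_injective, himg, Finset.card_range]

set_option maxHeartbeats 1000000 in
/-- If Z has column/row spaces orthogonal to those of X and ‖Z‖₂ ≤ σ_{r★}(X),
then the rank-r★ truncated SVD of X is a best rank-r★ approximation of X − Z. -/
theorem stmt5 {m n r : ℕ} (rs : ℕ) (hrs : 0 < rs) (hrsr : rs ≤ r)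
    (L : Matrix (Fin m) (Fin r) ℝ) (R : Matrix (Fin n) (Fin r) ℝ)
    (σ : Fin r → ℝ) (X Z : Matrix (Fin m) (Fin n) ℝ)
    (hL : Lᵀ * L = 1) (hR : Rᵀ * R = 1)
    (hσpos : ∀ i, 0 < σ i) (hσmono : ∀ i j : Fin r, i ≤ j → σ j ≤ σ i)
    (hX : X = L * Matrix.diagonal σ * Rᵀ)
    (hLZ : Lᵀ * Z = 0) (hZR : Z * R = 0)
    (hZ : ∀ v : Fin n → ℝ,
      ∑ i, (Z.mulVec v i) ^ 2 ≤ (σ ⟨rs - 1, by omega⟩) ^ 2 * ∑ j, (v j) ^ 2) :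
    ∀ Y : Matrix (Fin m) (Fin n) ℝ, Y.rank ≤ rs →
      frob (L * Matrix.diagonal (fun i : Fin r => if (i : ℕ) < rs then σ i else 0) * Rᵀ
          - (X - Z))
        ≤ frob (Y - (X - Z)) := by
  intro Y hrank
  classical
  have hrr : rs - 1 < r := by omega
  have hrn : r ≤ n := by
    have h1 : (Rᵀ * R).rank = r := by rw [hR, Matrix.rank_one, Fintype.card_fin]
    have h2 : (Rᵀ * R).rank ≤ R.rank := Matrix.rank_mul_le_right _ _
    have h3 : R.rank ≤ n := Matrix.rank_le_height R
    omega
  have hrsn : rs ≤ n := le_trans hrsr hrn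
  obtain ⟨V, hV, hVcol⟩ := exists_adaptedV Y rs hrsn hrank
  have hVV : V * Vᵀ = 1 := mul_eq_one_comm.mp hV
  set σs : ℝ := σ ⟨rs - 1, hrr⟩ with hσs
  set M : Matrix (Fin m) (Fin n) ℝ := X - Z with hM
  set S : ℝ := ∑ i : Fin r, if (i : ℕ) < rs then σ i ^ 2 else 0 with hS
  set FZ : ℝ := ∑ i, ∑ j, (Z i j) ^ 2 with hFZ
  set t : Finset (Fin n) := Finset.univ.filter (fun j : Fin n => (j : ℕ) < rs) with ht
  -- column norms of V
  have hcol1 : ∀ j : Fin n, ∑ i, (V i j) ^ 2 = 1 := by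
    intro j
    have h := congrFun (congrFun hV j) j
    simpa [Matrix.mul_apply, Matrix.one_apply, Matrix.transpose_apply, sq] using h
  -- columns of products
  have hcolmul : ∀ {m' : ℕ} (A : Matrix (Fin m') (Fin n) ℝ) (j : Fin n) (i : Fin m'),
      A.mulVec (fun k => V k j) i = (A * V) i j := by
    intro m' A j i
    simp [Matrix.mulVec, Matrix.mul_apply, dotProduct]
  have hFVcols : ∀ A : Matrix (Fin m) (Fin n) ℝ,
      ∑ j : Fin n, ∑ i, (A.mulVec (fun k => V k j) i) ^ 2 = ∑ i, ∑ j, (A i j) ^ 2 := by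
    intro A
    have h1 : ∑ j : Fin n, ∑ i, (A.mulVec (fun k => V k j) i) ^ 2
        = ∑ j : Fin n, ∑ i, ((A * V) i j) ^ 2 := by
      apply Finset.sum_congr rfl; intro j _
      apply Finset.sum_congr rfl; intro i _
      rw [hcolmul]
    rw [h1, Finset.sum_comm, FV A V hV]
  -- Claim A
  have claimA : ∑ j ∈ t, ∑ i, (M.mulVec (fun k => V k j) i) ^ 2 ≤ S := by
    have hMX : L * Matrix.diagonal σ * Rᵀ - Z = M := by rw [hM, hX]
    have hcb : ∀ j ∈ t, ∑ i, (M.mulVec (fun k => V k j) i) ^ 2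
        ≤ σs ^ 2 + ∑ i : Fin r, (σ i ^ 2 - σs ^ 2) * ((Rᵀ * V) i j) ^ 2 := by
      intro j _
      have h := colbound rs hrs hrsr L R σ Z hL hR hLZ hZR hZ (fun k => V k j) (hcol1 j)
      rw [hMX] at h
      refine le_trans h (le_of_eq ?_)
      have h9 : ∑ i : Fin r, (σ i ^ 2 - σs ^ 2) * ((Rᵀ).mulVec (fun k => V k j) i) ^ 2
          = ∑ i : Fin r, (σ i ^ 2 - σs ^ 2) * ((Rᵀ * V) i j) ^ 2 :=
        Finset.sum_congr rfl (fun i _ => by rw [hcolmul])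
      rw [h9]
    refine le_trans (Finset.sum_le_sum hcb) ?_
    rw [Finset.sum_add_distrib, Finset.sum_const, ht, card_filter_lt n rs hrsn]
    rw [Finset.sum_comm]
    have hc_le : ∀ i : Fin r, ∑ j ∈ t, ((Rᵀ * V) i j) ^ 2 ≤ 1 := by
      intro i
      have hsub : ∑ j ∈ t, ((Rᵀ * V) i j) ^ 2 ≤ ∑ j : Fin n, ((Rᵀ * V) i j) ^ 2 :=
        Finset.sum_le_sum_of_subset_of_nonneg (Finset.subset_univ _)
          (fun j _ _ => sq_nonneg _)
      have hfull : ∑ j : Fin n, ((Rᵀ * V) i j) ^ 2 = 1 := by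
        set B : Matrix (Fin r) (Fin n) ℝ := Rᵀ * V with hB
        have h1 : B * Bᵀ = 1 := by
          rw [hB, Matrix.transpose_mul, Matrix.transpose_transpose]
          have h2 : Rᵀ * V * (Vᵀ * R) = Rᵀ * ((V * Vᵀ) * R) := by
            simp only [Matrix.mul_assoc]
          rw [h2, hVV, Matrix.one_mul, hR]
        have h3 := congrFun (congrFun h1 i) i
        simpa only [Matrix.mul_apply, Matrix.one_apply_eq, Matrix.transpose_apply, sq]
          using h3
      linarith
    have hterm : ∀ i : Fin r, ∑ j ∈ t, (σ i ^ 2 - σs ^ 2) * ((Rᵀ * V) i j) ^ 2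
        ≤ (if (i : ℕ) < rs then σ i ^ 2 - σs ^ 2 else 0) := by
      intro i
      rw [← Finset.mul_sum]
      have hcpos : 0 ≤ ∑ j ∈ t, ((Rᵀ * V) i j) ^ 2 :=
        Finset.sum_nonneg fun j _ => sq_nonneg _
      have hσspos : (0:ℝ) < σs := hσpos ⟨rs - 1, hrr⟩
      by_cases hi : (i : ℕ) < rs
      · rw [if_pos hi]
        have hσi : σs ≤ σ i := by
          rw [hσs]
          exact hσmono i ⟨rs - 1, hrr⟩ (by simp [Fin.le_def]; omega)
        have hd : 0 ≤ σ i ^ 2 - σs ^ 2 := by nlinarith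
        nlinarith [hc_le i]
      · rw [if_neg hi]
        have hσi : σ i ≤ σs := by
          rw [hσs]
          exact hσmono ⟨rs - 1, hrr⟩ i (by simp [Fin.le_def]; omega)
        have hd : σ i ^ 2 - σs ^ 2 ≤ 0 := by nlinarith [hσpos i]
        nlinarith
    have h4 := Finset.sum_le_sum (fun i (_ : i ∈ Finset.univ) => hterm i)
    have h5 : ∑ i : Fin r, (if (i : ℕ) < rs then σ i ^ 2 - σs ^ 2 else 0)
        = S - rs * σs ^ 2 := by
      have h6 : ∀ i : Fin r, (if (i : ℕ) < rs then σ i ^ 2 - σs ^ 2 else 0)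
          = (if (i : ℕ) < rs then σ i ^ 2 else 0) - (if (i : ℕ) < rs then σs ^ 2 else 0) := by
        intro i; split <;> ring
      rw [Finset.sum_congr rfl (fun i _ => h6 i), Finset.sum_sub_distrib, hS]
      have h7 : ∑ i : Fin r, (if (i : ℕ) < rs then σs ^ 2 else 0) = rs * σs ^ 2 := by
        rw [Finset.sum_ite, Finset.sum_const, Finset.sum_const_zero, add_zero,
          card_filter_lt r rs hrsr, nsmul_eq_mul]
      rw [h7]
    rw [nsmul_eq_mul]
    linarith [h4, h5.symm.le, h5.le]
  -- lower bound for F (Y - M)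
  have hYlow : (∑ i, ∑ j, (M i j) ^ 2) - S ≤ ∑ i, ∑ j, ((Y - M) i j) ^ 2 := by
    have hid := hFVcols (Y - M)
    have hidM := hFVcols M
    have hnotp : ∀ j : Fin n, ¬((j : ℕ) < rs) →
        ∑ i, ((Y - M).mulVec (fun k => V k j) i) ^ 2
          = ∑ i, (M.mulVec (fun k => V k j) i) ^ 2 := by
      intro j hj
      apply Finset.sum_congr rfl
      intro i _
      rw [Matrix.sub_mulVec]
      rw [show Y.mulVec (fun k => V k j) = 0 from hVcol j (by omega)]
      simp
    have e1 := Finset.sum_filter_add_sum_filter_not Finset.univ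
      (fun j : Fin n => (j : ℕ) < rs)
      (fun j => ∑ i, ((Y - M).mulVec (fun k => V k j) i) ^ 2)
    have e1M := Finset.sum_filter_add_sum_filter_not Finset.univ
      (fun j : Fin n => (j : ℕ) < rs)
      (fun j => ∑ i, (M.mulVec (fun k => V k j) i) ^ 2)
    have e2 : ∑ j ∈ Finset.univ.filter (fun j : Fin n => ¬((j : ℕ) < rs)),
          ∑ i, ((Y - M).mulVec (fun k => V k j) i) ^ 2
        = ∑ j ∈ Finset.univ.filter (fun j : Fin n => ¬((j : ℕ) < rs)),
          ∑ i, (M.mulVec (fun k => V k j) i) ^ 2 := by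
      apply Finset.sum_congr rfl
      intro j hj
      exact hnotp j (Finset.mem_filter.mp hj).2
    have e3 : (0:ℝ) ≤ ∑ j ∈ t, ∑ i, ((Y - M).mulVec (fun k => V k j) i) ^ 2 :=
      Finset.sum_nonneg fun j _ => Finset.sum_nonneg fun i _ => sq_nonneg _
    have e4 : (0:ℝ) ≤ ∑ j ∈ t, ∑ i, (M.mulVec (fun k => V k j) i) ^ 2 :=
      Finset.sum_nonneg fun j _ => Finset.sum_nonneg fun i _ => sq_nonneg _
    rw [ht] at claimA e3 e4
    linarith [claimA, hid, hidM, e1, e1M, e2, e3, e4]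
  -- F X and F M
  have hXsq : ∑ i, ∑ j, (X i j) ^ 2 = ∑ i : Fin r, σ i ^ 2 := by
    rw [hX]; exact sandwich L R hL hR σ
  have hMF : ∑ i, ∑ j, (M i j) ^ 2 = (∑ i : Fin r, σ i ^ 2) + FZ := by
    have h1 : M = X + (-Z) := by rw [hM, sub_eq_add_neg]
    rw [h1, Fadd]
    have h2 : Matrix.trace (Xᵀ * (-Z)) = 0 := by
      rw [Matrix.mul_neg, Matrix.trace_neg, hX, cross_zero L R Z hLZ σ, neg_zero]
    have h3 : ∑ i, ∑ j, ((-Z) i j) ^ 2 = FZ := by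
      rw [hFZ]
      apply Finset.sum_congr rfl; intro i _
      apply Finset.sum_congr rfl; intro j _
      simp [Matrix.neg_apply]
    rw [h2, hXsq, h3]
    ring
  -- F (Xhat - M)
  set e : Fin r → ℝ := fun i => (if (i : ℕ) < rs then σ i else 0) - σ i with he
  have hA : L * Matrix.diagonal (fun i : Fin r => if (i : ℕ) < rs then σ i else 0) * Rᵀ - M
      = L * Matrix.diagonal e * Rᵀ + Z := by
    have hdiag : Matrix.diagonal e
        = Matrix.diagonal (fun i : Fin r => if (i : ℕ) < rs then σ i else 0)
          - Matrix.diagonal σ := by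
      rw [← Matrix.diagonal_sub]
    rw [hM, hX, hdiag, Matrix.mul_sub, Matrix.sub_mul]
    abel
  have hXhatF : ∑ i, ∑ j,
      ((L * Matrix.diagonal (fun i : Fin r => if (i : ℕ) < rs then σ i else 0) * Rᵀ - M) i j) ^ 2
      = (∑ i : Fin r, (if (i : ℕ) < rs then 0 else σ i ^ 2)) + FZ := by
    rw [hA, Fadd, sandwich L R hL hR e, cross_zero L R Z hLZ e]
    have he2 : ∑ i, e i ^ 2 = ∑ i : Fin r, (if (i : ℕ) < rs then 0 else σ i ^ 2) := by
      apply Finset.sum_congr rfl; intro i _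
      rw [he]
      by_cases hi : (i : ℕ) < rs
      · simp [hi]
      · simp [hi]
    rw [he2, hFZ]
    ring
  have hsum_split : ∑ i : Fin r, σ i ^ 2
      = S + ∑ i : Fin r, (if (i : ℕ) < rs then 0 else σ i ^ 2) := by
    rw [hS, ← Finset.sum_add_distrib]
    apply Finset.sum_congr rfl; intro i _
    split <;> ring
  unfold frob
  apply Real.sqrt_le_sqrt
  rw [hXhatF]
  linarith [hYlow, hMF, hsum_split]
end

section
/- Let ℓ be differentiable and consider g(A, B) = f(ABᵀ) + (λ/2)(‖A‖_F² + ‖B‖_F²) for differentiable f: ℝ^{m×n} → ℝ, A ∈ ℝ^{m×r}, B ∈ ℝ^{n×r}, λ > 0. If (A, B) is a stationary point of g (∇_A g = 0 and ∇_B g = 0), then AᵀA = BᵀB. -/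
open Matrix BigOperators

/-- At a stationary point of g(A,B) = f(ABᵀ) + (λ/2)(‖A‖² + ‖B‖²) with λ > 0,
one has AᵀA = BᵀB. Stationarity is expressed via the gradient G of f at ABᵀ:
∇_A g = G·B + λA = 0 and ∇_B g = Gᵀ·A + λB = 0. -/
theorem stmt18 {m n r : ℕ} (lam : ℝ) (hlam : 0 < lam)
    (f : Matrix (Fin m) (Fin n) ℝ → ℝ)
    (A : Matrix (Fin m) (Fin r) ℝ) (B : Matrix (Fin n) (Fin r) ℝ)
    (G : Matrix (Fin m) (Fin n) ℝ)
    (hG : ∀ H : Matrix (Fin m) (Fin n) ℝ,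
      HasDerivAt (fun t : ℝ => f (A * Bᵀ + t • H)) (mip G H) 0)
    (h1 : G * B + lam • A = 0)
    (h2 : Gᵀ * A + lam • B = 0) :
    Aᵀ * A = Bᵀ * B := by
  have e1 : Aᵀ * (G * B + lam • A) = 0 := by rw [h1, Matrix.mul_zero]
  have e2 : Bᵀ * (Gᵀ * A + lam • B) = 0 := by rw [h2, Matrix.mul_zero]
  have k1 : Aᵀ * (G * B) + lam • (Aᵀ * A) = 0 := by
    simpa [Matrix.mul_add, Matrix.mul_smul] using e1
  have k2 : Bᵀ * (Gᵀ * A) + lam • (Bᵀ * B) = 0 := by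
    simpa [Matrix.mul_add, Matrix.mul_smul] using e2
  have k3 : Aᵀ * (G * B) + lam • (Bᵀ * B) = 0 := by
    have := congrArg Matrix.transpose k2
    simpa [Matrix.transpose_add, Matrix.transpose_mul, Matrix.transpose_smul,
      Matrix.mul_assoc] using this
  have key : lam • (Aᵀ * A) = lam • (Bᵀ * B) := by
    have h1' : lam • (Aᵀ * A) = -(Aᵀ * (G * B)) := by
      rw [eq_neg_iff_add_eq_zero, add_comm]; exact k1
    have h3' : lam • (Bᵀ * B) = -(Aᵀ * (G * B)) := by
      rw [eq_neg_iff_add_eq_zero, add_comm]; exact k3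
    rw [h1', h3']
  exact smul_right_injective _ hlam.ne' key
end
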